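/- Let A ∈ ℝ^{2n×2n} be symmetric positive definite, partitioned into n×n blocks as A = [[A₁₁, A₁₂],[A₁₂ᵀ, A₂₂]], let A₁₁ = L₁₁L₁₁ᵀ be the Cholesky factorization of A₁₁, and let L₁ := [[L₁₁, 0],[(L₁₁⁻¹A₁₂)ᵀ, (L₁₁ᵀ)⁻¹]]. Then ‖L₁‖₂² ≤ ‖A‖₂ + ‖A₁₁⁻¹ − S‖₂, where S := A₂₂ − A₁₂ᵀ A₁₁⁻¹ A₁₂. -/

import Mathlib

open Matrix

/-- Spectral norm (ℓ² operator norm) of a real square matrix. -/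
noncomputable def specNorm {m : Type*} [Fintype m] [DecidableEq m] (M : Matrix m m ℝ) : ℝ :=
  ‖LinearMap.toContinuousLinearMap (Matrix.toEuclideanLin M)‖

/-- Frobenius norm of a real square matrix. -/
noncomputable def frobNorm {m : Type*} [Fintype m] (M : Matrix m m ℝ) : ℝ :=
  Real.sqrt (∑ i, ∑ j, (M i j) ^ 2)

/-- Spectral condition number κ₂(M) = ‖M⁻¹‖₂ ‖M‖₂. -/
noncomputable def cond2 {m : Type*} [Fintype m] [DecidableEq m] (M : Matrix m m ℝ) : ℝ :=
  specNorm M⁻¹ * specNorm M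

/-- Spectral radius of a real square matrix (via its complex spectrum). -/
noncomputable def specRad {m : Type*} [Fintype m] [DecidableEq m] (M : Matrix m m ℝ) : ℝ :=
  (spectralRadius ℂ (M.map (Complex.ofReal ·))).toReal

/-- Lower triangular predicate. -/
def LowerTri {k : ℕ} (M : Matrix (Fin k) (Fin k) ℝ) : Prop := ∀ i j, i < j → M i j = 0
/-- Upper triangular predicate. -/
def UpperTri {k : ℕ} (M : Matrix (Fin k) (Fin k) ℝ) : Prop := ∀ i j, j < i → M i j = 0
/-- Positive diagonal entries predicate. -/
def PosDiag {k : ℕ} (M : Matrix (Fin k) (Fin k) ℝ) : Prop := ∀ i, 0 < M i i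

/-- The standard symplectic matrix J = [[0, I], [-I, 0]]. -/
noncomputable def Jmat (n : ℕ) : Matrix (Fin n ⊕ Fin n) (Fin n ⊕ Fin n) ℝ :=
  fromBlocks 0 1 (-1) 0

/-- M is symplectic iff MᵀJM = J. -/
def IsSymplectic {n : ℕ} (M : Matrix (Fin n ⊕ Fin n) (Fin n ⊕ Fin n) ℝ) : Prop :=
  Mᵀ * Jmat n * M = Jmat n

/-- Ω(M) = MᵀJM − J, the loss of symplecticity. -/
noncomputable def Omega {n : ℕ} (M : Matrix (Fin n ⊕ Fin n) (Fin n ⊕ Fin n) ℝ) :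
    Matrix (Fin n ⊕ Fin n) (Fin n ⊕ Fin n) ℝ :=
  Mᵀ * Jmat n * M - Jmat n

open scoped Matrix.Norms.L2Operator

lemma specNorm_eq_l2 {m : Type*} [Fintype m] [DecidableEq m] (M : Matrix m m ℝ) :
    specNorm M = ‖M‖ := rfl

lemma specNorm_pad {k l : Type*} [Fintype k] [DecidableEq k] [Fintype l] [DecidableEq l]
    (E : Matrix l l ℝ) :
    specNorm (fromBlocks (0 : Matrix k k ℝ) 0 0 E) ≤ specNorm E := by
  unfold specNorm
  refine ContinuousLinearMap.opNorm_le_bound _ (norm_nonneg _) fun x => ?_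
  set y : EuclideanSpace ℝ l := (WithLp.equiv 2 _).symm (fun i => x (Sum.inr i)) with hy
  have hyi : ∀ i, y i = x (Sum.inr i) := fun i => rfl
  have hmv : (fromBlocks (0 : Matrix k k ℝ) 0 0 E) *ᵥ (WithLp.equiv 2 _ x) =
      Sum.elim (0 : k → ℝ) (E *ᵥ fun i => x (Sum.inr i)) := by
    rw [fromBlocks_mulVec]
    funext j
    cases j <;> simp <;> rfl
  have h1 : ∀ i : k,
      (LinearMap.toContinuousLinearMap
        (toEuclideanLin (fromBlocks (0 : Matrix k k ℝ) 0 0 E)) x) (Sum.inl i) = 0 := by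
    intro i
    show (toEuclideanLin (fromBlocks (0 : Matrix k k ℝ) 0 0 E) x) (Sum.inl i) = 0
    rw [toEuclideanLin_apply, PiLp.toLp_apply, show WithLp.ofLp x = WithLp.equiv 2 _ x from rfl, hmv]
    rfl
  have h2 : ∀ i : l,
      (LinearMap.toContinuousLinearMap
        (toEuclideanLin (fromBlocks (0 : Matrix k k ℝ) 0 0 E)) x) (Sum.inr i)
      = (LinearMap.toContinuousLinearMap (toEuclideanLin E) y) i := by
    intro i
    show (toEuclideanLin (fromBlocks (0 : Matrix k k ℝ) 0 0 E) x) (Sum.inr i)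
      = (toEuclideanLin E y) i
    rw [toEuclideanLin_apply, toEuclideanLin_apply, PiLp.toLp_apply,
      PiLp.toLp_apply, show WithLp.ofLp x = WithLp.equiv 2 _ x from rfl, hmv]
    rfl
  have hTx : ‖(LinearMap.toContinuousLinearMap
      (toEuclideanLin (fromBlocks (0 : Matrix k k ℝ) 0 0 E))) x‖
      = ‖(LinearMap.toContinuousLinearMap (toEuclideanLin E)) y‖ := by
    rw [EuclideanSpace.norm_eq, EuclideanSpace.norm_eq]
    congr 1
    rw [Fintype.sum_sum_type]
    simp only [h1, h2]
    simp
  have hyx : ‖y‖ ≤ ‖x‖ := by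
    rw [EuclideanSpace.norm_eq, EuclideanSpace.norm_eq]
    apply Real.sqrt_le_sqrt
    rw [Fintype.sum_sum_type]
    have : (∑ i : l, ‖y i‖ ^ 2) = ∑ i : l, ‖x (Sum.inr i)‖ ^ 2 := by
      exact Finset.sum_congr rfl fun i _ => by rw [hyi]
    rw [this]
    exact le_add_of_nonneg_left (Finset.sum_nonneg fun i _ => by positivity)
  calc ‖(LinearMap.toContinuousLinearMap
        (toEuclideanLin (fromBlocks (0 : Matrix k k ℝ) 0 0 E))) x‖
      = ‖(LinearMap.toContinuousLinearMap (toEuclideanLin E)) y‖ := hTx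
    _ ≤ ‖LinearMap.toContinuousLinearMap (toEuclideanLin E)‖ * ‖y‖ :=
        (LinearMap.toContinuousLinearMap (toEuclideanLin E)).le_opNorm y
    _ ≤ ‖LinearMap.toContinuousLinearMap (toEuclideanLin E)‖ * ‖x‖ :=
        mul_le_mul_of_nonneg_left hyx (norm_nonneg _)

theorem stmt7_aux {n : ℕ} (hn : 1 ≤ n)
    (A11 A12 A22 L11 : Matrix (Fin n) (Fin n) ℝ)
    (A : Matrix (Fin n ⊕ Fin n) (Fin n ⊕ Fin n) ℝ)
    (hA : A = fromBlocks A11 A12 A12ᵀ A22)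
    (hpd : A.PosDef)
    (hchol : A11 = L11 * L11ᵀ) :
    (specNorm (fromBlocks L11 0 (L11⁻¹ * A12)ᵀ L11ᵀ⁻¹)) ^ 2 ≤
      specNorm A + specNorm (A11⁻¹ - (A22 - A12ᵀ * A11⁻¹ * A12)) := by
  classical
  -- A11 is positive definite
  have hA11 : A11.PosDef := by
    refine posDef_iff_dotProduct_mulVec.mpr ⟨?_, ?_⟩
    · ext i j
      have h := hpd.1
      rw [hA] at h
      have := congrFun (congrFun h (Sum.inl i)) (Sum.inl j)
      simpa [conjTranspose_apply, fromBlocks] using this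
    · intro x hx
      have hx' : Sum.elim x (0 : Fin n → ℝ) ≠ 0 := by
        intro h
        apply hx
        funext i
        exact congrFun h (Sum.inl i)
      have h := (posDef_iff_dotProduct_mulVec.mp hpd).2 hx'
      rw [hA] at h
      have hv : (fromBlocks A11 A12 A12ᵀ A22) *ᵥ Sum.elim x (0 : Fin n → ℝ)
          = Sum.elim (A11 *ᵥ x) (A12ᵀ *ᵥ x) := by
        rw [fromBlocks_mulVec]
        funext j
        cases j <;> simp [Sum.elim_comp_inl, Sum.elim_comp_inr]
      rw [hv] at h
      have hst : star (Sum.elim x (0 : Fin n → ℝ)) = Sum.elim (star x) 0 := by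
        funext j; cases j <;> simp
      rw [hst, sumElim_dotProduct_sumElim] at h
      simpa using h
  have hdet : IsUnit L11.det := by
    have h1 : (0 : ℝ) < A11.det := hA11.det_pos
    rw [hchol, det_mul, det_transpose] at h1
    have h2 : L11.det ≠ 0 := by
      intro h
      rw [h] at h1
      simp at h1
    exact h2.isUnit
  have hinv : L11 * L11⁻¹ = 1 := mul_nonsing_inv _ hdet
  have hAinv : A11⁻¹ = L11ᵀ⁻¹ * L11⁻¹ := by rw [hchol, Matrix.mul_inv_rev]
  set E : Matrix (Fin n) (Fin n) ℝ := A11⁻¹ - (A22 - A12ᵀ * A11⁻¹ * A12) with hE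
  set M : Matrix (Fin n ⊕ Fin n) (Fin n ⊕ Fin n) ℝ :=
    fromBlocks L11 0 (L11⁻¹ * A12)ᵀ L11ᵀ⁻¹ with hM
  have hfac : M * Mᵀ = A + fromBlocks 0 0 0 E := by
    rw [hM, hA, fromBlocks_transpose, fromBlocks_multiply, fromBlocks_add]
    have b12 : L11 * (L11⁻¹ * A12)ᵀᵀ + 0 * L11ᵀ⁻¹ᵀ = A12 := by
      rw [transpose_transpose, Matrix.zero_mul, add_zero, ← Matrix.mul_assoc, hinv,
        Matrix.one_mul]
    have b21 : (L11⁻¹ * A12)ᵀ * L11ᵀ + L11ᵀ⁻¹ * 0ᵀ = A12ᵀ := by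
      rw [transpose_zero, Matrix.mul_zero, add_zero, ← transpose_mul, ← Matrix.mul_assoc,
        hinv, Matrix.one_mul]
    have b22 : (L11⁻¹ * A12)ᵀ * (L11⁻¹ * A12)ᵀᵀ + L11ᵀ⁻¹ * L11ᵀ⁻¹ᵀ = A22 + E := by
      rw [transpose_transpose]
      have h1 : (L11⁻¹ * A12)ᵀ * (L11⁻¹ * A12) = A12ᵀ * A11⁻¹ * A12 := by
        rw [transpose_mul, hAinv, transpose_nonsing_inv]
        noncomm_ring
      have h2 : L11ᵀ⁻¹ * L11ᵀ⁻¹ᵀ = A11⁻¹ := by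
        rw [hAinv, ← transpose_nonsing_inv, transpose_transpose]
      rw [h1, h2, hE]
      abel
    rw [b12, b21, b22]
    simp [hchol]
  have hnormM : specNorm M ^ 2 = ‖M * Mᵀ‖ := by
    have hH : (Mᵀ)ᴴ = M := by simp
    calc specNorm M ^ 2 = ‖M‖ * ‖M‖ := by rw [specNorm_eq_l2, sq]
      _ = ‖(Mᵀ)ᴴ‖ * ‖(Mᵀ)ᴴ‖ := by rw [hH]
      _ = ‖Mᵀ‖ * ‖Mᵀ‖ := by rw [l2_opNorm_conjTranspose]
      _ = ‖(Mᵀ)ᴴ * Mᵀ‖ := (l2_opNorm_conjTranspose_mul_self _).symm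
      _ = ‖M * Mᵀ‖ := by rw [hH]
  calc specNorm M ^ 2 = ‖M * Mᵀ‖ := hnormM
    _ = ‖A + fromBlocks 0 0 0 E‖ := by rw [hfac]
    _ ≤ ‖A‖ + ‖fromBlocks 0 0 0 E‖ := norm_add_le _ _
    _ = specNorm A + specNorm (fromBlocks (0 : Matrix (Fin n) (Fin n) ℝ) 0 0 E) := by
        rw [specNorm_eq_l2, specNorm_eq_l2]
    _ ≤ specNorm A + specNorm E := add_le_add_right (specNorm_pad E) _


/-- ‖L₁‖₂² ≤ ‖A‖₂ + ‖A₁₁⁻¹ − S‖₂ for L₁ = [[L₁₁,0],[(L₁₁⁻¹A₁₂)ᵀ,(L₁₁ᵀ)⁻¹]]. -/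
theorem stmt7 {n : ℕ} (hn : 1 ≤ n)
    (A11 A12 A22 L11 : Matrix (Fin n) (Fin n) ℝ)
    (A : Matrix (Fin n ⊕ Fin n) (Fin n ⊕ Fin n) ℝ)
    (hA : A = fromBlocks A11 A12 A12ᵀ A22)
    (hpd : A.PosDef)
    (hlow : LowerTri L11) (hdiag : PosDiag L11) (hchol : A11 = L11 * L11ᵀ) :
    (specNorm (fromBlocks L11 0 (L11⁻¹ * A12)ᵀ L11ᵀ⁻¹)) ^ 2 ≤
      specNorm A + specNorm (A11⁻¹ - (A22 - A12ᵀ * A11⁻¹ * A12)) :=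
  stmt7_aux hn A11 A12 A22 L11 A hA hpd hchol
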